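/- Let p be a prime and d ≥ 1 an integer. The set of squarefree monic polynomials of degree d in ℤ_p[x] has Haar measure 1 with respect to the product Haar probability measure on the coefficient space ℤ_p^d. -/

import Mathlib

open Polynomial MeasureTheory Filter Topology

noncomputable section

instance padicMeasurableSpace (p : ℕ) [Fact p.Prime] : MeasurableSpace ℤ_[p] := borel _

instance padicBorelSpace (p : ℕ) [Fact p.Prime] : BorelSpace ℤ_[p] := ⟨rfl⟩

/-- The Haar probability measure on `ℤ_[p]`, normalized so that `ℤ_[p]` has measure 1. -/
def padicHaar (p : ℕ) [Fact p.Prime] : Measure ℤ_[p] :=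
  Measure.addHaarMeasure ⟨⟨Set.univ, isCompact_univ⟩, by simp⟩

/-- The monic polynomial of degree `d` with non-leading coefficients given by `a`. -/
def monicOf {R : Type*} [CommRing R] (d : ℕ) (a : Fin d → R) : R[X] :=
  X ^ d + ∑ i : Fin d, C (a i) * X ^ (i : ℕ)

namespace SqfAux

instance instProb (p : ℕ) [Fact p.Prime] : IsProbabilityMeasure (padicHaar p) :=
  ⟨Measure.addHaarMeasure_self⟩

instance instHaar (p : ℕ) [Fact p.Prime] : (padicHaar p).IsAddHaarMeasure :=
  Measure.isAddHaarMeasure_addHaarMeasure _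

instance instNeBot (p : ℕ) [Fact p.Prime] : (𝓝[≠] (0 : ℤ_[p])).NeBot := by
  rw [← mem_closure_iff_nhdsWithin_neBot]
  have h : Tendsto (fun n => (p : ℤ_[p]) ^ n) atTop (𝓝 0) :=
    tendsto_pow_atTop_nhds_zero_of_norm_lt_one (by
      rw [PadicInt.norm_p]
      exact inv_lt_one_of_one_lt₀ (by exact_mod_cast (Fact.out : p.Prime).one_lt))
  refine mem_closure_of_tendsto h (Eventually.of_forall fun n => ?_)
  simp only [Set.mem_compl_iff, Set.mem_singleton_iff]
  exact pow_ne_zero _ (Nat.cast_ne_zero.mpr (Fact.out : p.Prime).ne_zero)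

instance instNoAtoms (p : ℕ) [Fact p.Prime] : NullSingletonClass (padicHaar p) := inferInstance

section PolyLemmas

variable {R : Type*} [CommRing R]

theorem coeff_monicOf (d : ℕ) (a : Fin d → R) (k : ℕ) :
    (monicOf d a).coeff k = if h : k < d then a ⟨k, h⟩ else if k = d then 1 else 0 := by
  have hsum : (∑ i : Fin d, C (a i) * X ^ (i : ℕ)).coeff k
      = if h : k < d then a ⟨k, h⟩ else 0 := by
    rw [finset_sum_coeff]
    simp only [coeff_C_mul, coeff_X_pow, mul_ite, mul_one, mul_zero]
    split_ifs with h1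
    · rw [Finset.sum_eq_single (⟨k, h1⟩ : Fin d)]
      · simp
      · intro b _ hb
        rw [if_neg]
        exact fun hh => hb (by ext; exact hh.symm)
      · simp
    · rw [Finset.sum_eq_zero]
      intro b _
      rw [if_neg]
      exact fun hh => h1 (hh ▸ b.2)
  rw [monicOf, coeff_add, hsum, coeff_X_pow]
  split_ifs with h1 h2 h3 <;> first | omega | simp

variable [Nontrivial R]

theorem monic_monicOf (d : ℕ) (a : Fin d → R) : (monicOf d a).Monic := by
  apply monic_of_natDegree_le_of_coeff_eq_one d
  · rw [natDegree_le_iff_coeff_eq_zero]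
    intro m hm
    rw [coeff_monicOf, dif_neg (by omega), if_neg (by omega)]
  · rw [coeff_monicOf, dif_neg (lt_irrefl d), if_pos rfl]

theorem natDegree_monicOf (d : ℕ) (a : Fin d → R) : (monicOf d a).natDegree = d := by
  refine le_antisymm ?_ (le_natDegree_of_ne_zero ?_)
  · rw [natDegree_le_iff_coeff_eq_zero]
    intro m hm
    rw [coeff_monicOf, dif_neg (by omega), if_neg (by omega)]
  · rw [coeff_monicOf, dif_neg (lt_irrefl d), if_pos rfl]
    exact one_ne_zero

theorem eq_monicOf {P : R[X]} {d : ℕ} (hm : P.Monic) (hdeg : P.natDegree = d) :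
    P = monicOf d (fun i => P.coeff i) := by
  ext n
  rw [coeff_monicOf]
  split_ifs with h1 h2
  · rfl
  · subst h2; rw [← hdeg]; exact hm.coeff_natDegree
  · exact coeff_eq_zero_of_natDegree_lt (by omega)

theorem monicOf_cons (n : ℕ) (t : R) (y : Fin n → R) :
    monicOf (n + 1) (Fin.cons t y) = C t + monicOf (n + 1) (Fin.cons (0 : R) y) := by
  simp only [monicOf, Fin.sum_univ_succ, Fin.cons_zero, Fin.cons_succ, map_zero, zero_mul,
    Fin.val_zero, pow_zero, mul_one]
  ring

end PolyLemmas

theorem exists_monic_sq_dvd {R : Type*} [CommRing R] [IsDomain R] {f : R[X]} (hf : f.Monic)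
    (h : ¬ Squarefree f) :
    ∃ h g : R[X], h.Monic ∧ 1 ≤ h.natDegree ∧ g.Monic ∧ f = h ^ 2 * g := by
  rw [Squarefree] at h
  push_neg at h
  obtain ⟨x, hdvd, hunit⟩ := h
  have hx0 : x ≠ 0 := by
    rintro rfl
    rw [mul_zero, zero_dvd_iff] at hdvd
    exact hf.ne_zero hdvd
  obtain ⟨c, hc⟩ := hdvd
  have hlc : x.leadingCoeff * (x.leadingCoeff * c.leadingCoeff) = 1 := by
    have := congrArg leadingCoeff hc
    rw [hf.leadingCoeff, leadingCoeff_mul, leadingCoeff_mul] at this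
    rw [this]; ring
  obtain ⟨u, hu⟩ : IsUnit x.leadingCoeff := IsUnit.of_mul_eq_one _ hlc
  set v : R := ((u⁻¹ : Rˣ) : R) with hv
  have hvu : v * (u : R) = 1 := by rw [hv]; exact_mod_cast u.inv_mul
  set h := C v * x with hh
  have hmonic : h.Monic := by
    rw [Monic, hh, leadingCoeff_mul, leadingCoeff_C, ← hu, hvu]
  have hdegx : 1 ≤ x.natDegree := by
    by_contra hdeg
    push_neg at hdeg
    have hx : x = C (x.coeff 0) := eq_C_of_natDegree_eq_zero (by omega)
    apply hunit
    rw [hx]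
    rw [isUnit_C]
    have hlc0 : x.leadingCoeff = x.coeff 0 := by
      rw [leadingCoeff, Nat.lt_one_iff.mp hdeg]
    rw [← hlc0, ← hu]
    exact u.isUnit
  have hdeg : 1 ≤ h.natDegree := by
    rw [hh, natDegree_mul (by simpa [hv] using C_ne_zero.mpr (fun h0 => by simp [h0] at hvu)) hx0,
      natDegree_C, zero_add]
    exact hdegx
  refine ⟨h, C ((u : R) * (u : R)) * c, hmonic, hdeg, ?_, ?_⟩
  · apply (hmonic.pow 2).of_mul_monic_left
    rw [show h ^ 2 * (C ((u : R) * (u : R)) * c) = C (v * u) * C (v * u) * (x * x * c) by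
      rw [hh]; simp only [C_mul]; ring, hvu, ← hc]
    · simpa using hf
  · rw [show h ^ 2 * (C ((u : R) * (u : R)) * c) = C (v * u) * C (v * u) * (x * x * c) by
      rw [hh]; simp only [C_mul]; ring, hvu, ← hc]
    simp

variable (p : ℕ) [Fact p.Prime]

/-- The coefficient map sending `(b, c)` to the coefficients of `(monicOf e b)^2 * monicOf _ c`. -/
def sqMap (d e : ℕ) (bc : (Fin e → ℤ_[p]) × (Fin (d - 2 * e) → ℤ_[p])) : Fin d → ℤ_[p] :=
  fun i => (monicOf e bc.1 * monicOf e bc.1 * monicOf (d - 2 * e) bc.2).coeff i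

theorem continuous_coeff_mul {σ : Type*} [TopologicalSpace σ] {f g : σ → ℤ_[p][X]}
    (hf : ∀ n, Continuous fun x => (f x).coeff n) (hg : ∀ n, Continuous fun x => (g x).coeff n)
    (n : ℕ) : Continuous fun x => (f x * g x).coeff n := by
  simp only [coeff_mul]
  exact continuous_finset_sum _ fun q _ => (hf q.1).mul (hg q.2)

theorem continuous_coeff_monicOf {σ : Type*} [TopologicalSpace σ] (d : ℕ)
    {f : σ → Fin d → ℤ_[p]} (hf : Continuous f) (n : ℕ) :
    Continuous fun x => (monicOf d (f x)).coeff n := by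
  by_cases h : n < d
  · simp only [coeff_monicOf, dif_pos h]
    exact (continuous_apply _).comp hf
  · simp only [coeff_monicOf, dif_neg h]
    exact continuous_const

theorem continuous_sqMap (d e : ℕ) : Continuous (sqMap p d e) := by
  refine continuous_pi fun i => ?_
  exact continuous_coeff_mul p
    (continuous_coeff_mul p
      (continuous_coeff_monicOf p e continuous_fst)
      (continuous_coeff_monicOf p e continuous_fst))
    (continuous_coeff_monicOf p (d - 2 * e) continuous_snd) _

/-- The set of coefficient tuples of polynomials divisible by the square of a monic polynomial
of degree `e`. -/
def NSet (d e : ℕ) : Set (Fin d → ℤ_[p]) := Set.range (sqMap p d e)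

theorem isClosed_NSet (d e : ℕ) : IsClosed (NSet p d e) :=
  (isCompact_range (continuous_sqMap p d e)).isClosed

theorem cover (d : ℕ) (a : Fin d → ℤ_[p]) (hsf : ¬ Squarefree (monicOf d a)) :
    ∃ e ∈ Finset.Icc 1 (d / 2), a ∈ NSet p d e := by
  obtain ⟨h, g, hhm, hh1, hgm, hfeq⟩ := exists_monic_sq_dvd (monic_monicOf d a) hsf
  set e := h.natDegree with he
  have hdeq : d = 2 * e + g.natDegree := by
    have := congrArg natDegree hfeq
    rw [natDegree_monicOf, (hhm.pow 2).natDegree_mul hgm, hhm.natDegree_pow] at this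
    omega
  refine ⟨e, Finset.mem_Icc.mpr ⟨hh1, (Nat.le_div_iff_mul_le two_pos).mpr (by omega)⟩, ?_⟩
  refine ⟨(fun i => h.coeff i, fun i => g.coeff i), funext fun i => ?_⟩
  have h1 : monicOf e (fun i : Fin e => h.coeff i) = h := (eq_monicOf hhm rfl).symm
  have h2 : monicOf (d - 2 * e) (fun i : Fin (d - 2 * e) => g.coeff i) = g :=
    (eq_monicOf hgm (by omega)).symm
  show (monicOf e _ * monicOf e _ * monicOf (d - 2 * e) _).coeff (i : ℕ) = a i
  rw [h1, h2, show h * h * g = h ^ 2 * g by ring, ← hfeq, coeff_monicOf, dif_pos i.2]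

theorem slice_finite (n : ℕ) (y : Fin n → ℤ_[p]) :
    Set.Finite {t : ℤ_[p] | ∃ e ∈ Finset.Icc 1 ((n + 1) / 2),
      Fin.cons t y ∈ NSet p (n + 1) e} := by
  classical
  set K := AlgebraicClosure ℚ_[p]
  haveI : CharZero K := charZero_of_injective_algebraMap (algebraMap ℚ_[p] K).injective
  set φ : ℤ_[p] →+* K := (algebraMap ℚ_[p] K).comp (PadicInt.Coe.ringHom) with hφdef
  have hφ : Function.Injective φ := by
    refine (algebraMap ℚ_[p] K).injective.comp ?_
    intro a b hab
    exact Subtype.ext hab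
  set q : ℤ_[p][X] := monicOf (n + 1) (Fin.cons 0 y) with hq
  set Q : K[X] := q.map φ with hQ
  have hQm : Q.Monic := (monic_monicOf _ _).map φ
  have hQdeg : Q.natDegree = n + 1 := by
    rw [hQ, hq, (monic_monicOf _ _).natDegree_map, natDegree_monicOf]
  have hQ' : derivative Q ≠ 0 := fun hder => by
    have := natDegree_eq_zero_of_derivative_eq_zero hder
    omega
  apply Set.Finite.subset
    (Set.Finite.preimage hφ.injOn
      (((derivative Q).roots.toFinset.image fun α => - Q.eval α).finite_toSet))
  rintro t ⟨e, he, bc, hbc⟩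
  rw [Finset.mem_Icc] at he
  have h2e : 2 * e ≤ n + 1 := by
    have := (Nat.le_div_iff_mul_le two_pos).mp he.2
    omega
  set H := monicOf e bc.1 with hH
  set G := monicOf (n + 1 - 2 * e) bc.2 with hG
  have hfeq : monicOf (n + 1) (Fin.cons t y) = H * H * G := by
    have h1 : (H * H * G).Monic :=
      ((monic_monicOf _ _).mul (monic_monicOf _ _)).mul (monic_monicOf _ _)
    have hdeg : (H * H * G).natDegree = n + 1 := by
      rw [((monic_monicOf _ _).mul (monic_monicOf _ _)).natDegree_mul (monic_monicOf _ _),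
        (monic_monicOf _ _).natDegree_mul (monic_monicOf _ _)]
      simp only [hH, hG, natDegree_monicOf]
      omega
    rw [eq_monicOf h1 hdeg]
    congr 1
    funext i
    exact (congrFun hbc i).symm
  -- map everything to the algebraic closure
  set Hm : K[X] := H.map φ with hHm
  have hHmdeg : Hm.natDegree = e := by
    rw [hHm, (monic_monicOf _ _).natDegree_map]
    simp only [hH, natDegree_monicOf]
  obtain ⟨α, hα⟩ : ∃ α : K, IsRoot Hm α := by
    apply IsAlgClosed.exists_root
    intro hdeg0
    have := natDegree_eq_zero_iff_degree_le_zero.mpr (le_of_eq hdeg0)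
    omega
  have hmapeq : C (φ t) + Q = Hm * Hm * (G.map φ) := by
    have h0 : monicOf (n + 1) (Fin.cons t y) = C t + q := monicOf_cons n t y
    have := congrArg (Polynomial.map φ) (h0.symm.trans hfeq)
    simpa only [Polynomial.map_add, Polynomial.map_mul, map_C] using this
  have hevalF : φ t + Q.eval α = 0 := by
    have := congrArg (eval α) hmapeq
    simpa [hα.eq_zero] using this
  have hevalD : (derivative Q).eval α = 0 := by
    have h1 : derivative Q = derivative (Hm * Hm * (G.map φ)) := by
      rw [← hmapeq]
      simp
    rw [h1, derivative_mul, derivative_mul]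
    simp [hα.eq_zero]
  refine Set.mem_preimage.mpr ?_
  simp only [Finset.coe_image, Set.mem_image, Finset.mem_coe, Multiset.mem_toFinset]
  refine ⟨α, (mem_roots hQ').mpr hevalD, ?_⟩
  linear_combination -hevalF

end SqfAux

theorem measure_squarefree (p : ℕ) [Fact p.Prime] (d : ℕ) (hd : 1 ≤ d) :
    Measure.pi (fun _ : Fin d => padicHaar p)
      {a : Fin d → ℤ_[p] | Squarefree (monicOf d a)} = 1 := by
  classical
  open SqfAux in
  obtain ⟨n, rfl⟩ : ∃ n, d = n + 1 := ⟨d - 1, by omega⟩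
  set π : Measure (Fin (n + 1) → ℤ_[p]) := Measure.pi (fun _ : Fin (n + 1) => padicHaar p)
    with hπ
  set ν : Measure (Fin n → ℤ_[p]) := Measure.pi (fun _ : Fin n => padicHaar p) with hν
  set S : Set (Fin (n + 1) → ℤ_[p]) := {a | Squarefree (monicOf (n + 1) a)} with hS
  set N : Set (Fin (n + 1) → ℤ_[p]) :=
    ⋃ e ∈ Finset.Icc 1 ((n + 1) / 2), SqfAux.NSet p (n + 1) e with hN
  have hNmeas : MeasurableSet N := by
    refine MeasurableSet.biUnion (Finset.Icc 1 ((n + 1) / 2)).countable_toSet fun e _ =>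
      (SqfAux.isClosed_NSet p (n + 1) e).measurableSet
  have hcompl : Sᶜ ⊆ N := by
    intro a ha
    obtain ⟨e, he, hmem⟩ := SqfAux.cover p (n + 1) a ha
    exact Set.mem_biUnion he hmem
  -- the bad set is null
  have hNzero : π N = 0 := by
    have T := measurePreserving_piFinSuccAbove (fun _ : Fin (n + 1) => padicHaar p) 0
    set e0 := MeasurableEquiv.piFinSuccAbove (fun _ : Fin (n + 1) => ℤ_[p]) 0 with he0
    have hpre : π N = ((padicHaar p).prod
        (Measure.pi fun _ : Fin n => padicHaar p)) (e0.symm ⁻¹' N) :=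
      ((T.symm e0).measure_preimage hNmeas.nullMeasurableSet).symm
    rw [hpre, Measure.prod_apply_symm (e0.symm.measurable hNmeas)]
    have hzero : ∀ z : Fin n → ℤ_[p],
        padicHaar p ((fun t => (t, z)) ⁻¹' (e0.symm ⁻¹' N)) = 0 := by
      intro z
      refine measure_mono_null ?_ ((SqfAux.slice_finite p n z).measure_zero (padicHaar p))
      intro t ht
      simp only [Set.mem_preimage, he0, MeasurableEquiv.piFinSuccAbove_symm_apply,
        Fin.insertNthEquiv, Equiv.coe_fn_mk, Fin.insertNth_zero'] at ht
      rw [hN] at ht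
      simp only [Set.mem_iUnion, exists_prop] at ht
      obtain ⟨e, he1, he2⟩ := ht
      exact ⟨e, he1, he2⟩
    rw [lintegral_congr hzero, lintegral_zero]
  have h1le : (1 : ENNReal) ≤ π S := by
    have huniv : (Set.univ : Set (Fin (n + 1) → ℤ_[p])) ⊆ N ∪ S := fun a _ =>
      (em (a ∈ S)).elim Or.inr fun h => Or.inl (hcompl h)
    calc (1 : ENNReal) = π Set.univ := measure_univ.symm
      _ ≤ π (N ∪ S) := measure_mono huniv
      _ ≤ π N + π S := measure_union_le _ _
      _ = π S := by rw [hNzero, zero_add]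
  exact le_antisymm prob_le_one h1le

end
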